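/- The set D = {9·Σ_{s=i}^{j} 10^s : 0 ≤ i ≤ j} = {10^{j+1} - 10^i : 0 ≤ i ≤ j} is not an IP₃ set: there do not exist natural numbers n₁, n₂, n₃ ≥ 1 such that all of n₁, n₂, n₃, n₁+n₂, n₁+n₃, n₂+n₃, n₁+n₂+n₃ belong to D. -/

import Mathlib

/-- The set of differences of distinct powers of 10. -/
def powerTenDiffs : Set ℕ := {m | ∃ i j : ℕ, i ≤ j ∧ m = 10 ^ (j + 1) - 10 ^ i}

lemma pow10_inj {a b : ℕ} (h : (10:ℕ)^a = 10^b) : a = b :=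
  Nat.pow_right_injective (by norm_num) h

lemma pow10_pos (a : ℕ) : 0 < (10:ℕ)^a := Nat.pow_pos (by norm_num)

lemma le_of_sum2 {u x y : ℕ} (h : (10:ℕ)^u ≤ 10^x + 10^y) : u ≤ max x y := by
  have hx : (10:ℕ)^x ≤ 10^(max x y) := Nat.pow_le_pow_right (by norm_num) (le_max_left _ _)
  have hy : (10:ℕ)^y ≤ 10^(max x y) := Nat.pow_le_pow_right (by norm_num) (le_max_right _ _)
  have hp := pow10_pos (max x y)
  have h2 : (10:ℕ)^u < 10^(max x y + 1) := by
    have : (10:ℕ)^(max x y + 1) = 10 * 10^(max x y) := by ring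
    omega
  have := (Nat.pow_lt_pow_iff_right (a := 10) (by norm_num)).mp h2
  omega

lemma le_of_sum3 {u x y z : ℕ} (h : (10:ℕ)^u ≤ 10^x + 10^y + 10^z) : u ≤ max x (max y z) := by
  have hx : (10:ℕ)^x ≤ 10^(max x (max y z)) :=
    Nat.pow_le_pow_right (by norm_num) (le_max_left _ _)
  have hy : (10:ℕ)^y ≤ 10^(max x (max y z)) :=
    Nat.pow_le_pow_right (by norm_num) (le_trans (le_max_left _ _) (le_max_right _ _))
  have hz : (10:ℕ)^z ≤ 10^(max x (max y z)) :=
    Nat.pow_le_pow_right (by norm_num) (le_trans (le_max_right _ _) (le_max_right _ _))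
  have hp := pow10_pos (max x (max y z))
  have h2 : (10:ℕ)^u < 10^(max x (max y z) + 1) := by
    have : (10:ℕ)^(max x (max y z) + 1) = 10 * 10^(max x (max y z)) := by ring
    omega
  have := (Nat.pow_lt_pow_iff_right (a := 10) (by norm_num)).mp h2
  omega

lemma pair_lemma {a b c d : ℕ} (h : (10:ℕ)^a + 10^b = 10^c + 10^d) :
    (a = c ∧ b = d) ∨ (a = d ∧ b = c) := by
  have pa := pow10_pos a; have pb := pow10_pos b
  have pc := pow10_pos c; have pd := pow10_pos d
  have h1 : a ≤ max c d := le_of_sum2 (by omega)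
  have h1' : b ≤ max c d := le_of_sum2 (by omega)
  have h2 : c ≤ max a b := le_of_sum2 (by omega)
  have h2' : d ≤ max a b := le_of_sum2 (by omega)
  rcases le_total a b with hab | hab <;> rcases le_total c d with hcd | hcd
  · have hbd : b = d := by omega
    subst hbd
    have : (10:ℕ)^a = 10^c := by omega
    exact Or.inl ⟨pow10_inj this, rfl⟩
  · have hbc : b = c := by omega
    subst hbc
    have : (10:ℕ)^a = 10^d := by omega
    exact Or.inr ⟨pow10_inj this, rfl⟩
  · have had : a = d := by omega
    subst had
    have : (10:ℕ)^b = 10^c := by omega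
    exact Or.inr ⟨rfl, pow10_inj this⟩
  · have hac : a = c := by omega
    subst hac
    have : (10:ℕ)^b = 10^d := by omega
    exact Or.inl ⟨rfl, pow10_inj this⟩

lemma triple_sorted {a b c d e f : ℕ} (hb : b ≤ a) (hc : c ≤ a) (he : e ≤ d) (hf : f ≤ d)
    (h : (10:ℕ)^a + 10^b + 10^c = 10^d + 10^e + 10^f) :
    a = d ∧ ((b = e ∧ c = f) ∨ (b = f ∧ c = e)) := by
  have pa := pow10_pos a; have pb := pow10_pos b; have pc := pow10_pos c
  have pd := pow10_pos d; have pe := pow10_pos e; have pf := pow10_pos f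
  have h1 : a ≤ max d (max e f) := le_of_sum3 (by omega)
  have h2 : d ≤ max a (max b c) := le_of_sum3 (by omega)
  have had : a = d := by omega
  subst had
  have h3 : (10:ℕ)^b + 10^c = 10^e + 10^f := by omega
  exact ⟨rfl, pair_lemma h3⟩

set_option maxHeartbeats 1600000 in
lemma triple_lemma {a b c d e f : ℕ}
    (h : (10:ℕ)^a + 10^b + 10^c = 10^d + 10^e + 10^f) :
    (a = d ∧ ((b = e ∧ c = f) ∨ (b = f ∧ c = e))) ∨
    (a = e ∧ ((b = d ∧ c = f) ∨ (b = f ∧ c = d))) ∨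
    (a = f ∧ ((b = d ∧ c = e) ∨ (b = e ∧ c = d))) := by
  have hL : (b ≤ a ∧ c ≤ a) ∨ (a ≤ b ∧ c ≤ b) ∨ (a ≤ c ∧ b ≤ c) := by omega
  have hR : (e ≤ d ∧ f ≤ d) ∨ (d ≤ e ∧ f ≤ e) ∨ (d ≤ f ∧ e ≤ f) := by omega
  rcases hL with ⟨h1, h2⟩ | ⟨h1, h2⟩ | ⟨h1, h2⟩ <;>
    rcases hR with ⟨h3, h4⟩ | ⟨h3, h4⟩ | ⟨h3, h4⟩
  · have := triple_sorted h1 h2 h3 h4 (by omega); omega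
  · have := triple_sorted h1 h2 h3 h4 (show (10:ℕ)^a + 10^b + 10^c = 10^e + 10^d + 10^f by omega)
    omega
  · have := triple_sorted h1 h2 h3 h4 (show (10:ℕ)^a + 10^b + 10^c = 10^f + 10^d + 10^e by omega)
    omega
  · have := triple_sorted h1 h2 h3 h4 (show (10:ℕ)^b + 10^a + 10^c = 10^d + 10^e + 10^f by omega)
    omega
  · have := triple_sorted h1 h2 h3 h4 (show (10:ℕ)^b + 10^a + 10^c = 10^e + 10^d + 10^f by omega)
    omega
  · have := triple_sorted h1 h2 h3 h4 (show (10:ℕ)^b + 10^a + 10^c = 10^f + 10^d + 10^e by omega)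
    omega
  · have := triple_sorted h1 h2 h3 h4 (show (10:ℕ)^c + 10^a + 10^b = 10^d + 10^e + 10^f by omega)
    omega
  · have := triple_sorted h1 h2 h3 h4 (show (10:ℕ)^c + 10^a + 10^b = 10^e + 10^d + 10^f by omega)
    omega
  · have := triple_sorted h1 h2 h3 h4 (show (10:ℕ)^c + 10^a + 10^b = 10^f + 10^d + 10^e by omega)
    omega

/-- If two elements of `powerTenDiffs` (with 9-blocks at positions `[i,j]` and `[k,l]`)
sum to an element of `powerTenDiffs`, the blocks must be adjacent. -/
lemma adjacency {i j k l m n : ℕ} (hij : i ≤ j) (hkl : k ≤ l) (hnm : n ≤ m)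
    (h : (10^(j+1) - 10^i) + (10^(l+1) - 10^k) = 10^(m+1) - 10^n) :
    k = j + 1 ∨ i = l + 1 := by
  have h1 : (10:ℕ)^i ≤ 10^(j+1) := Nat.pow_le_pow_right (by norm_num) (by omega)
  have h2 : (10:ℕ)^k ≤ 10^(l+1) := Nat.pow_le_pow_right (by norm_num) (by omega)
  have h3 : (10:ℕ)^n ≤ 10^(m+1) := Nat.pow_le_pow_right (by norm_num) (by omega)
  have e : (10:ℕ)^(j+1) + 10^(l+1) + 10^n = 10^(m+1) + 10^i + 10^k := by omega
  have := triple_lemma e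
  rcases this with ⟨ha, hb | hb⟩ | ⟨ha, hb | hb⟩ | ⟨ha, hb | hb⟩ <;> omega

/-- `{10^{j+1} - 10^i : 0 ≤ i ≤ j}` is not an `IP₃` set. -/
theorem powerTenDiffs_not_IP3 :
    ¬ ∃ n₁ n₂ n₃ : ℕ, 1 ≤ n₁ ∧ 1 ≤ n₂ ∧ 1 ≤ n₃ ∧
      n₁ ∈ powerTenDiffs ∧ n₂ ∈ powerTenDiffs ∧ n₃ ∈ powerTenDiffs ∧
      n₁ + n₂ ∈ powerTenDiffs ∧ n₁ + n₃ ∈ powerTenDiffs ∧ n₂ + n₃ ∈ powerTenDiffs ∧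
      n₁ + n₂ + n₃ ∈ powerTenDiffs := by
  rintro ⟨n₁, n₂, n₃, -, -, -, ⟨i₁, j₁, hij₁, rfl⟩, ⟨i₂, j₂, hij₂, rfl⟩, ⟨i₃, j₃, hij₃, rfl⟩,
    ⟨a₁, b₁, hab₁, h12⟩, ⟨a₂, b₂, hab₂, h13⟩, ⟨a₃, b₃, hab₃, h23⟩, -⟩
  have A12 := adjacency hij₁ hij₂ hab₁ h12
  have A13 := adjacency hij₁ hij₃ hab₂ h13
  have A23 := adjacency hij₂ hij₃ hab₃ h23
  omega
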